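/- (Proposition 2: softmax attention as an expectation.) For every dimension D ≥ 1, every query q ∈ ℝ^D, keys k_1, …, k_M ∈ ℝ^D and values v_1, …, v_M ∈ ℝ^D, the vector-valued function ω ↦ p(ω) f(ω) is Lebesgue integrable on ℝ^D and ∫_{ℝ^D} p(ω) f(ω) dω = Σ_{m=1}^M π_m v_m, i.e. the expectation of the randomized-attention integrand f under the mixture density p equals the softmax attention output SoftmaxAttn(q, K, V). -/

import Mathlib

open MeasureTheory Real
open scoped RealInnerProductSpace

noncomputable section

/-- `E D` is Euclidean space `ℝ^D`. -/
abbrev E (D : ℕ) := EuclideanSpace ℝ (Fin D)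

/-- Gaussian density `N(ω; μ, I) = (2π)^{-D/2} exp(-‖ω - μ‖²/2)`. -/
def gaussN (D : ℕ) (μ ω : E D) : ℝ :=
  (2 * Real.pi) ^ (-(D : ℝ) / 2) * Real.exp (-‖ω - μ‖ ^ 2 / 2)

/-- Positive randomized mapping `ξ(x, ω) = exp(⟨ω, x⟩ - ‖x‖²/2)`. -/
def xi (D : ℕ) (x ω : E D) : ℝ :=
  Real.exp (⟪ω, x⟫ - ‖x‖ ^ 2 / 2)

/-- The RA Gaussian-mixture density `p(ω) = Σ_m π_m N(ω; q + k_m, I)` with softmax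
weights `π_m = exp(⟨q, k_m⟩)/Σ_{m'} exp(⟨q, k_{m'}⟩)`. -/
def raDensity (D M : ℕ) (q : E D) (k : Fin M → E D) (ω : E D) : ℝ :=
  ∑ m, (Real.exp ⟪q, k m⟫ / ∑ m', Real.exp ⟪q, k m'⟫) * gaussN D (q + k m) ω

/-- The randomized-attention integrand
`f(ω) = (Σ_m ξ(q,ω) ξ(k_m,ω) v_m) / (Σ_{m'} ξ(q,ω) ξ(k_{m'},ω))`. -/
def raIntegrand (D M : ℕ) (q : E D) (k v : Fin M → E D) (ω : E D) : E D :=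
  (∑ m', xi D q ω * xi D (k m') ω)⁻¹ • ∑ m, (xi D q ω * xi D (k m) ω) • v m


lemma integrable_base (D : ℕ) : Integrable (fun ω : E D => Real.exp (-‖ω‖ ^ 2 / 2)) := by
  have h := (GaussianFourier.integrable_cexp_neg_mul_sq_norm_add (V := E D)
    (b := (1/2 : ℂ)) (by norm_num) 0 0).norm
  apply h.congr
  filter_upwards with ω
  rw [Complex.norm_exp]
  simp [← Complex.ofReal_pow]
  ring_nf

lemma integral_base (D : ℕ) :
    ∫ ω : E D, Real.exp (-‖ω‖ ^ 2 / 2) = (2 * Real.pi) ^ ((D : ℝ) / 2) := by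
  have h := GaussianFourier.integral_rexp_neg_mul_sq_norm (V := E D) (b := (1/2 : ℝ)) (by norm_num)
  simp only [finrank_euclideanSpace_fin] at h
  rw [show (fun ω : E D => Real.exp (-‖ω‖ ^ 2 / 2)) = fun ω : E D => rexp (-(1/2) * ‖ω‖^2) by
    ext ω; ring_nf]
  rw [h, show Real.pi / (1/2) = 2 * Real.pi by ring]

lemma integrable_gaussN (D : ℕ) (μ : E D) : Integrable (fun ω => gaussN D μ ω) := by
  unfold gaussN
  exact (((integrable_base D).comp_sub_right μ).const_mul _)

lemma integral_gaussN (D : ℕ) (μ : E D) : ∫ ω, gaussN D μ ω = 1 := by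
  unfold gaussN
  rw [integral_const_mul]
  have : ∫ ω : E D, Real.exp (-‖ω - μ‖ ^ 2 / 2)
      = ∫ ω : E D, Real.exp (-‖ω‖ ^ 2 / 2) :=
    integral_sub_right_eq_self (fun ω : E D => Real.exp (-‖ω‖ ^ 2 / 2)) μ
  rw [this, integral_base, ← Real.rpow_add (by positivity),
    show (-(D:ℝ)/2 + (D:ℝ)/2) = 0 by ring, Real.rpow_zero]

lemma gauss_key (D : ℕ) (q km ω : E D) :
    gaussN D (q + km) ω
      = ((2 * Real.pi) ^ (-(D : ℝ) / 2) * Real.exp (-‖ω‖ ^ 2 / 2) * Real.exp (-⟪q, km⟫))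
        * (xi D q ω * xi D km ω) := by
  have key : Real.exp (-‖ω - (q + km)‖ ^ 2 / 2)
      = Real.exp (-‖ω‖ ^ 2 / 2) * Real.exp (-⟪q, km⟫)
        * (Real.exp (⟪ω, q⟫ - ‖q‖ ^ 2 / 2) * Real.exp (⟪ω, km⟫ - ‖km‖ ^ 2 / 2)) := by
    rw [← Real.exp_add, ← Real.exp_add, ← Real.exp_add]
    congr 1
    have h1 : ‖ω - (q + km)‖ ^ 2 = ‖ω‖ ^ 2 - 2 * ⟪ω, q + km⟫ + ‖q + km‖ ^ 2 :=
      norm_sub_sq_real ω (q + km)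
    have h2 : ‖q + km‖ ^ 2 = ‖q‖ ^ 2 + 2 * ⟪q, km⟫ + ‖km‖ ^ 2 := norm_add_sq_real q km
    have h3 : ⟪ω, q + km⟫ = ⟪ω, q⟫ + ⟪ω, km⟫ := inner_add_right ω q km
    rw [h1, h2, h3]; ring
  unfold gaussN xi
  rw [key]; ring

lemma pointwise_eq (D M : ℕ) (hM : 0 < M) (q : E D) (k v : Fin M → E D) (ω : E D) :
    raDensity D M q k ω • raIntegrand D M q k v ω
      = ∑ m, ((Real.exp ⟪q, k m⟫ / ∑ m', Real.exp ⟪q, k m'⟫) * gaussN D (q + k m) ω) • v m := by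
  haveI : Nonempty (Fin M) := ⟨⟨0, hM⟩⟩
  set S := ∑ m', Real.exp ⟪q, k m'⟫ with hS
  have hSpos : 0 < S := Finset.sum_pos (fun m _ => Real.exp_pos _) Finset.univ_nonempty
  set t := (2 * Real.pi) ^ (-(D : ℝ) / 2) * Real.exp (-‖ω‖ ^ 2 / 2) / S with ht
  have hterm : ∀ m, (Real.exp ⟪q, k m⟫ / S) * gaussN D (q + k m) ω
      = t * (xi D q ω * xi D (k m) ω) := by
    intro m
    rw [gauss_key D q (k m) ω, Real.exp_neg, ht]
    have hne : Real.exp ⟪q, k m⟫ ≠ 0 := (Real.exp_pos _).ne'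
    field_simp
  have hApos : 0 < ∑ m', xi D q ω * xi D (k m') ω :=
    Finset.sum_pos (fun m _ => mul_pos (Real.exp_pos _) (Real.exp_pos _)) Finset.univ_nonempty
  have hden : raDensity D M q k ω = t * ∑ m', xi D q ω * xi D (k m') ω := by
    unfold raDensity
    rw [Finset.mul_sum]
    exact Finset.sum_congr rfl fun m _ => hterm m
  rw [hden]
  unfold raIntegrand
  rw [smul_smul, mul_assoc, mul_inv_cancel₀ hApos.ne', mul_one, Finset.smul_sum]
  exact Finset.sum_congr rfl fun m _ => by rw [smul_smul, ← hterm m]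


/-- Proposition 2: softmax attention as an expectation. `ω ↦ p(ω) f(ω)` is Lebesgue
integrable and `∫ p(ω) f(ω) dω = Σ_m π_m v_m = SoftmaxAttn(q, K, V)`. -/
theorem softmax_attention_as_expectation (D M : ℕ) (hD : 1 ≤ D)
    (q : E D) (k v : Fin M → E D) :
    Integrable (fun ω => raDensity D M q k ω • raIntegrand D M q k v ω) ∧
    ∫ ω, raDensity D M q k ω • raIntegrand D M q k v ω =
      ∑ m, (Real.exp ⟪q, k m⟫ / ∑ m', Real.exp ⟪q, k m'⟫) • v m := by
  rcases Nat.eq_zero_or_pos M with hM | hM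
  · subst hM
    have h0 : (fun ω => raDensity D 0 q k ω • raIntegrand D 0 q k v ω)
        = fun _ => (0 : E D) := by
      funext ω; simp [raDensity]
    rw [h0]
    simp
  · have hpt : (fun ω => raDensity D M q k ω • raIntegrand D M q k v ω)
        = fun ω => ∑ m, ((Real.exp ⟪q, k m⟫ / ∑ m', Real.exp ⟪q, k m'⟫)
            * gaussN D (q + k m) ω) • v m := by
      funext ω; exact pointwise_eq D M hM q k v ω
    rw [hpt]
    have hInt : ∀ m : Fin M, Integrable (fun ω =>
        ((Real.exp ⟪q, k m⟫ / ∑ m', Real.exp ⟪q, k m'⟫) * gaussN D (q + k m) ω) • v m) :=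
      fun m => (((integrable_gaussN D (q + k m)).const_mul _).smul_const (v m))
    refine ⟨integrable_finset_sum _ fun m _ => hInt m, ?_⟩
    rw [integral_finset_sum _ fun m _ => hInt m]
    refine Finset.sum_congr rfl fun m _ => ?_
    rw [integral_smul_const, integral_const_mul, integral_gaussN, mul_one]
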